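/- Fix 1 ≤ i ≤ ℓ(β) and T ∈ X_i. If the steps of local-esh exchanging ⊠ with entries equal to i consist of a single Phase 1 vertical slide, or of a (possibly empty) sequence of Phase 2 horizontal slides, then ℓ_i(T) = s_i^{-1}(T); that is, T is a fixed point of s_i ∘ ℓ_i. -/

import Mathlib

/-
Common combinatorial framework for the paper
"Monodromy and K-theory of Schubert curves via generalized jeu de taquin"
(Gillespie–Levinson).

Cells are pairs (row, column), 0-indexed, with row 0 the top row (English
convention).  A skew tableau is modelled as a `Filling`, i.e. a function
`Cell → Option ℕ`; `none` means the cell is not in the (filled part of the)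
shape.  A punctured tableau is a filling together with a distinguished empty
cell `box` (the ⊠).
-/

namespace SC

/-- A cell `(row, column)` of the plane; row `0` is the top row. -/
abbrev Cell : Type := ℕ × ℕ

/-- A partial filling of the cells by natural-number entries. -/
abbrev Filling : Type := Cell → Option ℕ

/-- `readBefore p q` : the cell `p` comes strictly before `q` in reading order
(rows bottom to top, left to right within each row). -/
def readBefore (p q : Cell) : Prop :=
  q.1 < p.1 ∨ (p.1 = q.1 ∧ p.2 < q.2)

/-- Two cells share an edge. -/
def Adj (p q : Cell) : Prop :=
  (p.1 = q.1 ∧ (p.2 + 1 = q.2 ∨ q.2 + 1 = p.2)) ∨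
    (p.2 = q.2 ∧ (p.1 + 1 = q.1 ∨ q.1 + 1 = p.1))

/-- A partition contained in the `k × m` rectangle (parts indexed from `0`). -/
structure Partition (k m : ℕ) where
  part : ℕ → ℕ
  antitone' : ∀ ⦃i j : ℕ⦄, i ≤ j → part j ≤ part i
  le_width : ∀ i, part i ≤ m
  eq_zero : ∀ i, k ≤ i → part i = 0

/-- The size `|λ|` of a partition. -/
def Partition.size {k m : ℕ} (l : Partition k m) : ℕ :=
  ∑ i ∈ Finset.range k, l.part i

/-- The number `ℓ(λ)` of nonzero parts. -/
def Partition.length {k m : ℕ} (l : Partition k m) : ℕ :=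
  ((Finset.range k).filter fun i => l.part i ≠ 0).card

/-- The skew shape `γᶜ/α` inside the `k × m` rectangle: row `i` of `γᶜ` has
length `m - γ (k-1-i)`. -/
def totalShape (k m : ℕ) (a g : Partition k m) : Set Cell :=
  {p | p.1 < k ∧ a.part p.1 ≤ p.2 ∧ p.2 < m - g.part (k - 1 - p.1)}

/-- The set of filled cells of a filling. -/
def shapeOf (T : Filling) : Set Cell := {p | T p ≠ none}

/-- Rows are weakly increasing (on filled cells). -/
def RowsWeak (T : Filling) : Prop :=
  ∀ r c₁ c₂ v₁ v₂, c₁ ≤ c₂ → T (r, c₁) = some v₁ → T (r, c₂) = some v₂ → v₁ ≤ v₂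

/-- Columns are strictly increasing (on filled cells). -/
def ColsStrict (T : Filling) : Prop :=
  ∀ r₁ r₂ c v₁ v₂, r₁ < r₂ → T (r₁, c) = some v₁ → T (r₂, c) = some v₂ → v₁ < v₂

/-- All entries are at least `1`. -/
def PosEntries (T : Filling) : Prop := ∀ p v, T p = some v → 1 ≤ v

open scoped Classical in
/-- The number of cells of the `k × m` rectangle satisfying `P` and carrying
the entry `v`. -/
noncomputable def countP (k m : ℕ) (T : Filling) (P : Cell → Prop) (v : ℕ) : ℕ :=
  ((Finset.range k ×ˢ Finset.range m).filter fun p => P p ∧ T p = some v).card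

/-- The reading word is ballot: every weak suffix contains, for each `i ≥ 1`,
at least as many `i`'s as `(i+1)`'s. -/
def Ballot (k m : ℕ) (T : Filling) : Prop :=
  ∀ (p : Cell) (i : ℕ), 1 ≤ i →
    countP k m T (fun q => q = p ∨ readBefore p q) (i + 1) ≤
      countP k m T (fun q => q = p ∨ readBefore p q) i

/-- The filling has content `β`: the entry `j+1` occurs exactly `β j` times. -/
def HasContent (k m : ℕ) (b : Partition k m) (T : Filling) : Prop :=
  ∀ j : ℕ, countP k m T (fun _ => True) (j + 1) = b.part j

/-- A punctured tableau: a filling together with a distinguished empty cell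
(the `⊠`). -/
structure PState where
  box : Cell
  T : Filling

/-- Membership in `LR(α, □, β, γ)`: `T` is a Littlewood–Richardson skew tableau
of content `β`, `⊠` is an inner co-corner of `T`, and `⊠ ⊔ T` has shape `γᶜ/α`.
(The conditions on `(box.1, box.2 - 1)` and `(box.1 - 1, box.2)` say that the
west and north neighbours of the box are not in the shape; note that if
`box.2 = 0` resp. `box.1 = 0` the displayed cell is the box itself, which is
empty, so the condition is automatic, as it should be.) -/
def MemLR1 (k m : ℕ) (a b g : Partition k m) (x : PState) : Prop :=
  x.box ∈ totalShape k m a g ∧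
  (∀ p : Cell, (x.T p).isSome ↔ (p ∈ totalShape k m a g ∧ p ≠ x.box)) ∧
  RowsWeak x.T ∧ ColsStrict x.T ∧ PosEntries x.T ∧
  Ballot k m x.T ∧ HasContent k m b x.T ∧
  (x.box.1, x.box.2 - 1) ∉ shapeOf x.T ∧ (x.box.1 - 1, x.box.2) ∉ shapeOf x.T

/-- Membership in `LR(α, β, □, γ)`: as in `MemLR1` but the box `⊠` extends `T`
outward (its east and south neighbours are not in the shape). -/
def MemLR2 (k m : ℕ) (a b g : Partition k m) (x : PState) : Prop :=
  x.box ∈ totalShape k m a g ∧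
  (∀ p : Cell, (x.T p).isSome ↔ (p ∈ totalShape k m a g ∧ p ≠ x.box)) ∧
  RowsWeak x.T ∧ ColsStrict x.T ∧ PosEntries x.T ∧
  Ballot k m x.T ∧ HasContent k m b x.T ∧
  (x.box.1, x.box.2 + 1) ∉ shapeOf x.T ∧ (x.box.1 + 1, x.box.2) ∉ shapeOf x.T

/-- Exchange the box with the cell `q`, which receives the box while the old
box cell receives the entry `v`. -/
def swapState (x : PState) (q : Cell) (v : ℕ) : PState :=
  ⟨q, Function.update (Function.update x.T q none) x.box (some v)⟩

/-! ### The local evacuation-shuffle -/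

/-- Phase 1 applies at value `i` iff the box does not precede all of the `i`'s
in reading order. -/
def phase1Cond (i : ℕ) (x : PState) : Prop :=
  ∃ q, x.T q = some i ∧ readBefore q x.box

/-- `q` is the nearest `i` strictly prior to the box in reading order. -/
def Phase1Move (i : ℕ) (x : PState) (q : Cell) : Prop :=
  x.T q = some i ∧ readBefore q x.box ∧
    ∀ q', x.T q' = some i → readBefore q' x.box → q' = q ∨ readBefore q' q

/-- Phase 2 continues at value `i` iff the suffix of the reading word strictly
after the box contains strictly more `i`'s than `(i+1)`'s. -/
def phase2Cond (k m i : ℕ) (x : PState) : Prop :=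
  countP k m x.T (fun q => readBefore x.box q) (i + 1) <
    countP k m x.T (fun q => readBefore x.box q) i

/-- `q` is the nearest `i` strictly after the box in reading order. -/
def Phase2Move (i : ℕ) (x : PState) (q : Cell) : Prop :=
  x.T q = some i ∧ readBefore x.box q ∧
    ∀ q', x.T q' = some i → readBefore x.box q' → q' = q ∨ readBefore q q'

/-- One step of the local evacuation-shuffle algorithm, on states
`(i, phase, x)` where `phase = false` is Phase 1 and `phase = true` is
Phase 2, and `lb = ℓ(β)`.  The algorithm starts at `(1, false, x)` and is
stuck exactly at the states with `i = lb + 1`. -/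
inductive Step (k m lb : ℕ) : ℕ × Bool × PState → ℕ × Bool × PState → Prop
  | p1 {i : ℕ} {x : PState} {q : Cell} (hi : i ≤ lb) (h : Phase1Move i x q) :
      Step k m lb (i, false, x) (i + 1, false, swapState x q i)
  | p1to2 {i : ℕ} {x : PState} (hi : i ≤ lb) (h : ¬ phase1Cond i x) :
      Step k m lb (i, false, x) (i, true, x)
  | p2 {i : ℕ} {x : PState} {q : Cell} (hi : i ≤ lb) (hc : phase2Cond k m i x)
      (h : Phase2Move i x q) :
      Step k m lb (i, true, x) (i, true, swapState x q i)
  | p2inc {i : ℕ} {x : PState} (hi : i ≤ lb) (hc : ¬ phase2Cond k m i x) :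
      Step k m lb (i, true, x) (i + 1, true, x)

/-- The complete run of the local evacuation-shuffle:
`local-esh (x) = y`. -/
def LocalEshRun (k m lb : ℕ) (x y : PState) : Prop :=
  ∃ bl : Bool, Relation.ReflTransGen (Step k m lb) (1, false, x) (lb + 1, bl, y)

/-! ### Jeu de taquin slides -/

/-- One step of an inward jeu de taquin slide: the empty box moves north or
west, the displaced entry moves south-east into the old box.  Ties between the
north and west entries are broken by moving the north entry. -/
inductive InStep : PState → PState → Prop
  | north {x : PState} {r c v : ℕ} (hb : x.box = (r + 1, c)) (hv : x.T (r, c) = some v)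
      (hw : ∀ w, x.T (r + 1, c - 1) = some w → w ≤ v) :
      InStep x (swapState x (r, c) v)
  | west {x : PState} {r c v : ℕ} (hb : x.box = (r, c + 1)) (hv : x.T (r, c) = some v)
      (hn : ∀ w, x.T (r - 1, c + 1) = some w → w < v) :
      InStep x (swapState x (r, c) v)

/-- One step of an outward jeu de taquin slide: the empty box moves south or
east, the displaced entry moves north-west into the old box.  Ties between the
south and east entries are broken by moving the south entry. -/
inductive OutStep : PState → PState → Prop
  | south {x : PState} {r c v : ℕ} (hb : x.box = (r, c)) (hv : x.T (r + 1, c) = some v)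
      (he : ∀ w, x.T (r, c + 1) = some w → v ≤ w) :
      OutStep x (swapState x (r + 1, c) v)
  | east {x : PState} {r c v : ℕ} (hb : x.box = (r, c)) (hv : x.T (r, c + 1) = some v)
      (hs : ∀ w, x.T (r + 1, c) = some w → v < w) :
      OutStep x (swapState x (r, c + 1) v)

/-- Run a step relation to completion. -/
def RunToEnd (R : PState → PState → Prop) (x y : PState) : Prop :=
  Relation.ReflTransGen R x y ∧ ∀ z, ¬ R y z

/-- The shuffle `sh : LR(α,β,□,γ) → LR(α,□,β,γ)`: the complete inward jeu de
taquin slide of `T` into the box. -/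
def ShRun (x y : PState) : Prop := RunToEnd InStep x y

/-! ### Rectification, promotion, and the evacuation-shuffle -/

/-- `S` is (the set of cells of) a skew shape `λ/μ`. -/
def IsSkewShape (S : Set Cell) : Prop :=
  ∃ lam mu : ℕ → ℕ,
    (∀ ⦃i j : ℕ⦄, i ≤ j → lam j ≤ lam i) ∧ (∀ ⦃i j : ℕ⦄, i ≤ j → mu j ≤ mu i) ∧
    (∀ i, mu i ≤ lam i) ∧ ∀ p : Cell, p ∈ S ↔ mu p.1 ≤ p.2 ∧ p.2 < lam p.1

/-- `c` is an inner co-corner of the shape `S` (an addable corner of the inner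
partition). -/
def InnerAddable (S : Set Cell) (c : Cell) : Prop :=
  c ∉ S ∧ IsSkewShape (insert c S) ∧ (c.1, c.2 - 1) ∉ S ∧ (c.1 - 1, c.2) ∉ S

/-- One rectification move on a filling `U`: slide the hole inward from an
inner co-corner `c` through `U` until it exits; `d` records the vacated outer
cell and `V` is the resulting filling. -/
def RectMove (U V : Filling) (d : Cell) : Prop :=
  ∃ c : Cell, InnerAddable (shapeOf U) c ∧ RunToEnd OutStep ⟨c, U⟩ ⟨d, V⟩

/-- A sequence of rectification moves, recording the vacated cells. -/
inductive RectSeq : Filling → List Cell → Filling → Prop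
  | nil (U : Filling) : RectSeq U [] U
  | cons {U V W : Filling} {d : Cell} {ds : List Cell} :
      RectMove U V d → RectSeq V ds W → RectSeq U (d :: ds) W

/-- One un-rectification move: slide the hole outward-to-inward starting at the
recorded cell `d` (this is the inverse of the rectification move that vacated
`d`). -/
def UnRectMove (V W : Filling) (d : Cell) : Prop :=
  d ∉ shapeOf V ∧ ∃ c : Cell, RunToEnd InStep ⟨d, V⟩ ⟨c, W⟩

/-- A sequence of un-rectification moves along a list of recorded cells. -/
inductive UnRectSeq : Filling → List Cell → Filling → Prop
  | nil (U : Filling) : UnRectSeq U [] U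
  | cons {U V W : Filling} {d : Cell} {ds : List Cell} :
      UnRectMove U V d → UnRectSeq V ds W → UnRectSeq U (d :: ds) W

/-- `S` is a straight (non-skew) shape. -/
def IsStraight (S : Set Cell) : Prop :=
  ∀ p ∈ S, ∀ q : Cell, q.1 ≤ p.1 → q.2 ≤ p.2 → q ∈ S

/-- Jeu de taquin promotion step on a rectified tableau containing the entry
`0`: delete the `0`, rectify the remainder (one outward slide of the hole),
and label the vacated outer corner with `lb + 1`. -/
def PromMove (lb : ℕ) (R R' : Filling) : Prop :=
  ∃ (p d : Cell) (V : Filling), R p = some 0 ∧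
    RunToEnd OutStep ⟨p, Function.update R p none⟩ ⟨d, V⟩ ∧
    R' = Function.update V d (some (lb + 1))

/-- The evacuation-shuffle `esh : LR(α,□,β,γ) → LR(α,β,□,γ)`: treat `⊠` as the
entry `0`, rectify recording the order, promote (delete the `0`, rectify the
remainder, label the vacated corner `ℓ(β)+1`), un-rectify along the recorded
order reversed, and turn the entry `ℓ(β)+1` back into `⊠`. -/
def EshRel (lb : ℕ) (x y : PState) : Prop :=
  ∃ (ds : List Cell) (R R' W : Filling),
    RectSeq (Function.update x.T x.box (some 0)) ds R ∧
    IsStraight (shapeOf R) ∧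
    PromMove lb R R' ∧
    UnRectSeq R' ds.reverse W ∧
    W y.box = some (lb + 1) ∧ y.T = Function.update W y.box none

/-- The monodromy operator `ω = sh ∘ local-esh` (as a relation). -/
def OmegaRel (k m lb : ℕ) (x y : PState) : Prop :=
  ∃ z : PState, LocalEshRun k m lb x z ∧ ShRun z y

/-! ### Genomic tableaux -/

/-- `(U, {b₁, b₂})` is a ballot genomic tableau of shape `γᶜ/α` and K-theoretic
content `β`, with repeated (extra) entry `i`; here `b₁` comes before `b₂` in
reading order. -/
def IsGenomic (k m : ℕ) (a b g : Partition k m) (i : ℕ)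
    (U : Filling) (b₁ b₂ : Cell) : Prop :=
  1 ≤ i ∧
  (∀ p : Cell, (U p).isSome ↔ p ∈ totalShape k m a g) ∧
  RowsWeak U ∧ ColsStrict U ∧ PosEntries U ∧
  (∀ j : ℕ, countP k m U (fun _ => True) (j + 1)
      = b.part j + if j + 1 = i then 1 else 0) ∧
  readBefore b₁ b₂ ∧ ¬ Adj b₁ b₂ ∧ U b₁ = some i ∧ U b₂ = some i ∧
  (∀ q : Cell, U q = some i → readBefore b₁ q → readBefore q b₂ → False) ∧
  Ballot k m (Function.update U b₁ none) ∧
  Ballot k m (Function.update U b₂ none)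

/-- `K(γᶜ/α; β)(i)`: ballot genomic tableaux with repeated entry `i`. -/
def KSet (k m : ℕ) (a b g : Partition k m) (i : ℕ) : Set (Filling × Cell × Cell) :=
  {u | IsGenomic k m a b g i u.1 u.2.1 u.2.2}

/-- `K(γᶜ/α; β)`: all ballot genomic tableaux of shape `γᶜ/α` and K-theoretic
content `β`. -/
def KAll (k m : ℕ) (a b g : Partition k m) : Set (Filling × Cell × Cell) :=
  ⋃ i : ℕ, KSet k m a b g i

/-! ### Permutation utilities -/

/-- The reflection length of a permutation: the least number of transpositions
whose product is `g`. -/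
noncomputable def rlength {X : Type*} (g : Equiv.Perm X) : ℕ :=
  letI := Classical.decEq X
  sInf {n : ℕ | ∃ l : List (Equiv.Perm X), l.length = n ∧
    (∀ τ ∈ l, ∃ x y : X, x ≠ y ∧ τ = Equiv.swap x y) ∧ l.prod = g}

/-- The set of orbits of a permutation. -/
def orbitsOf {X : Type*} (g : Equiv.Perm X) : Set (Set X) :=
  {s | ∃ a : X, s = {b | g.SameCycle a b}}

/-- The number of orbits of a permutation. -/
noncomputable def orbitCount {X : Type*} (g : Equiv.Perm X) : ℕ :=
  (orbitsOf g).ncard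

/-! ### The sets `Xᵢ` and the factors `ℓᵢ`, `sᵢ` -/

/-- The box sits between the `(i-1)`-st and `i`-th horizontal strips:
giving the box any value strictly between `i - 1` and `i` would keep rows
weakly increasing and columns strictly increasing. -/
def BoxBetween (i : ℕ) (x : PState) : Prop :=
  (∀ c v, c < x.box.2 → x.T (x.box.1, c) = some v → v ≤ i - 1) ∧
  (∀ c v, x.box.2 < c → x.T (x.box.1, c) = some v → i ≤ v) ∧
  (∀ r v, r < x.box.1 → x.T (r, x.box.2) = some v → v ≤ i - 1) ∧
  (∀ r v, x.box.1 < r → x.T (r, x.box.2) = some v → i ≤ v)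

/-- The set `Xᵢ` of punctured tableaux of content `β` and total shape `γᶜ/α`
with ballot reading word, semistandard rows and columns (omitting `⊠`), in
which `⊠` lies between the `(i-1)`-st and `i`-th horizontal strips. -/
def XSet (k m : ℕ) (a b g : Partition k m) (i : ℕ) : Set PState :=
  {x | x.box ∈ totalShape k m a g ∧
    (∀ p : Cell, (x.T p).isSome ↔ (p ∈ totalShape k m a g ∧ p ≠ x.box)) ∧
    RowsWeak x.T ∧ ColsStrict x.T ∧ PosEntries x.T ∧
    Ballot k m x.T ∧ HasContent k m b x.T ∧ BoxBetween i x}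

/-- One Phase 2 move at value `i` (as a standalone step relation). -/
def P2Step (k m i : ℕ) (x y : PState) : Prop :=
  phase2Cond k m i x ∧ ∃ q, Phase2Move i x q ∧ y = swapState x q i

/-- The operator `ℓᵢ : Xᵢ → Xᵢ₊₁`: the composition of the steps of
`local-esh` exchanging `⊠` with entries equal to `i` (a single Phase 1 move
if some `i` precedes the box, otherwise the Phase 2 loop at value `i`). -/
def LiRel (k m i : ℕ) (x y : PState) : Prop :=
  (∃ q, Phase1Move i x q ∧ y = swapState x q i) ∨
  (¬ phase1Cond i x ∧ Relation.ReflTransGen (P2Step k m i) x y ∧ ¬ phase2Cond k m i y)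

/-- One step of the inward jeu de taquin shuffle in which the box passes an
entry equal to `i`. -/
def SiStep (i : ℕ) (x y : PState) : Prop := InStep x y ∧ x.T y.box = some i

/-- The operator `sᵢ : Xᵢ₊₁ → Xᵢ`: the inward jeu de taquin shuffle of `⊠`
past the entries equal to `i`. -/
def SiRun (i : ℕ) (x y : PState) : Prop :=
  Relation.ReflTransGen (SiStep i) x y ∧ ∀ z, ¬ SiStep i y z

/-- `DownTo j` is the composite `s₁ ∘ s₂ ∘ ⋯ ∘ s_j : X_{j+1} → X₁`. -/
inductive DownTo : ℕ → PState → PState → Prop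
  | zero (x : PState) : DownTo 0 x x
  | succ {j : ℕ} {x y z : PState} : SiRun (j + 1) x y → DownTo j y z → DownTo (j + 1) x z

/-! ### Auxiliary lemmas for Statement 15 -/

lemma pstate_ext {x y : PState} (h1 : x.box = y.box) (h2 : x.T = y.T) : x = y := by
  cases x; cases y; simp_all

@[simp] lemma swapBox (x : PState) (q : Cell) (v : ℕ) : (swapState x q v).box = q := rfl

lemma swapT (x : PState) (q : Cell) (v : ℕ) (p : Cell) :
    (swapState x q v).T p
      = if p = x.box then some v else if p = q then none else x.T p := by
  simp [swapState, Function.update_apply]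

lemma readBefore_asymm {p q : Cell} (h1 : readBefore p q) (h2 : readBefore q p) : False := by
  simp only [readBefore] at h1 h2; omega

lemma no_sistep {i : ℕ} (h1 : 1 ≤ i) {z : PState} (hbb : BoxBetween i z) :
    ∀ y, ¬ SiStep i z y := by
  rintro y ⟨hins, hy⟩
  obtain ⟨B1, B2, B3, B4⟩ := hbb
  cases hins with
  | @north r c v hb hv hw =>
    have hy' : z.T (r, c) = some i := hy
    have hvi : v = i := by rw [hv] at hy'; exact Option.some.inj hy'
    have h3 := B3 r v
    rw [hb] at h3
    have h5 : v ≤ i - 1 := h3 (Nat.lt_succ_self r) hv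
    omega
  | @west r c v hb hv hn =>
    have hy' : z.T (r, c) = some i := hy
    have hvi : v = i := by rw [hv] at hy'; exact Option.some.inj hy'
    have h3 := B1 c v
    rw [hb] at h3
    have h5 : v ≤ i - 1 := h3 (Nat.lt_succ_self c) hv
    omega

/-- If the steps of `local-esh` exchanging `⊠` with entries
equal to `i` consist of a single Phase 1 vertical slide, or a (possibly empty)
sequence of Phase 2 horizontal slides, then `ℓᵢ(T) = sᵢ⁻¹(T)`; that is, `T`
is a fixed point of `sᵢ ∘ ℓᵢ`. -/
theorem stmt_15 (k m : ℕ) (hk : 0 < k) (hm : 0 < m) (a b g : Partition k m)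
    (hsz : a.size + b.size + g.size = k * m - 1)
    (i : ℕ) (h1 : 1 ≤ i) (h2 : i ≤ b.length)
    (z : PState) (hz : z ∈ XSet k m a b g i)
    (hcase : (∃ q, Phase1Move i z q ∧ q.2 = z.box.2) ∨
      (¬ phase1Cond i z ∧ ∀ u v, Relation.ReflTransGen (P2Step k m i) z u →
        P2Step k m i u v → v.box.1 = u.box.1)) :
    ∀ w, LiRel k m i z w → SiRun i w z := by
  obtain ⟨hbox, hiff, hrw, hcs, hpos, hbal, hcont, hbb⟩ := hz
  obtain ⟨B1, B2, B3, B4⟩ := hbb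
  obtain ⟨hkk, hka, hkg⟩ := hbox
  have hnone : z.T z.box = none := by
    by_contra h
    exact ((hiff z.box).mp (Option.isSome_iff_ne_none.mpr h)).2 rfl
  have hshape : ∀ p v', z.T p = some v' → p ∈ totalShape k m a g := by
    intro p v' h
    exact ((hiff p).mp (by simp [h])).1
  have hfill : ∀ p : Cell, p ∈ totalShape k m a g → p ≠ z.box → ∃ v', z.T p = some v' := by
    intro p hp hne
    rcases Option.isSome_iff_exists.mp ((hiff p).mpr ⟨hp, hne⟩) with ⟨v', hv'⟩
    exact ⟨v', hv'⟩
  have hnostep : ∀ y, ¬ SiStep i z y := no_sistep h1 ⟨B1, B2, B3, B4⟩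
  intro w hw
  rcases hcase with ⟨q, hq, hqc⟩ | ⟨hnp1, hall⟩
  · -- Case A : a single Phase 1 vertical slide
    rcases hw with ⟨q', hq', rfl⟩ | ⟨hnp, _, _⟩
    swap
    · exact absurd ⟨q, hq.1, hq.2.1⟩ hnp
    have hqq : q' = q := by
      rcases hq.2.2 q' hq'.1 hq'.2.1 with h | h
      · exact h
      · rcases hq'.2.2 q hq.1 hq.2.1 with h2 | h2
        · exact h2.symm
        · exact (readBefore_asymm h h2).elim
    rw [hqq]
    clear hq'
    have hq1 : z.box.1 < q.1 := by
      have hrb := hq.2.1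
      simp only [readBefore] at hrb
      omega
    obtain ⟨hqk, hqa, hqg⟩ := hshape q i hq.1
    have hq1' : q.1 = z.box.1 + 1 := by
      by_contra hne
      have h2' : z.box.1 + 1 < q.1 := by omega
      have hpmem : ((z.box.1 + 1, z.box.2) : Cell) ∈ totalShape k m a g := by
        refine ⟨by omega, le_trans (a.antitone' (Nat.le_succ _)) hka, ?_⟩
        have hg := g.antitone' (show k - 1 - q.1 ≤ k - 1 - (z.box.1 + 1) by omega)
        simp only at hqg ⊢
        omega
      obtain ⟨vp, hvp⟩ := hfill _ hpmem
        (by intro h; exact absurd (congrArg Prod.fst h) (by simp))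
      have hge : i ≤ vp := B4 (z.box.1 + 1) vp (Nat.lt_succ_self _) hvp
      have hqT : z.T (q.1, z.box.2) = some i := by
        rw [← hqc]; exact hq.1
      have hlt : vp < i := hcs (z.box.1 + 1) q.1 z.box.2 vp i h2' hvp hqT
      omega
    have hqe : q = (z.box.1 + 1, z.box.2) := by
      rw [← hqc, ← hq1']
    subst hqe
    have key : swapState (swapState z (z.box.1 + 1, z.box.2) i) (z.box.1, z.box.2) i = z := by
      refine pstate_ext rfl (funext fun p => ?_)
      simp only [swapT, swapBox]
      by_cases hA : p = (z.box.1 + 1, z.box.2)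
      · rw [if_pos hA, hA]; exact hq.1.symm
      · rw [if_neg hA]
        by_cases hB : p = (z.box.1, z.box.2)
        · rw [if_pos hB, hB]; exact hnone.symm
        · rw [if_neg hB, if_neg (show ¬ p = z.box from hB), if_neg hA]
    have hstep : SiStep i (swapState z (z.box.1 + 1, z.box.2) i) z := by
      constructor
      · have hb : (swapState z (z.box.1 + 1, z.box.2) i).box = (z.box.1 + 1, z.box.2) := rfl
        have hv : (swapState z (z.box.1 + 1, z.box.2) i).T (z.box.1, z.box.2) = some i := by
          rw [swapT, if_pos (show ((z.box.1, z.box.2) : Cell) = z.box from rfl)]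
        have hwle : ∀ w', (swapState z (z.box.1 + 1, z.box.2) i).T
            (z.box.1 + 1, z.box.2 - 1) = some w' → w' ≤ i := by
          intro w' hw'
          rw [swapT] at hw'
          split_ifs at hw' with hA hB
          · have := Option.some.inj hw'
            omega
          · exact hrw (z.box.1 + 1) (z.box.2 - 1) z.box.2 w' i (Nat.sub_le _ _) hw' hq.1
        have h := InStep.north (r := z.box.1) (c := z.box.2) (v := i) hb hv hwle
        rwa [key] at h
      · have h : (swapState z (z.box.1 + 1, z.box.2) i).T z.box = some i := by
          rw [swapT, if_pos rfl]
        exact h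
    exact ⟨Relation.ReflTransGen.single hstep, hnostep⟩
  · -- Case B : a (possibly empty) sequence of Phase 2 horizontal slides
    rcases hw with ⟨q, hq, rfl⟩ | ⟨-, hchain, -⟩
    · exact absurd ⟨q, hq.1, hq.2.1⟩ hnp1
    have hinv : ∀ u, Relation.ReflTransGen (P2Step k m i) z u →
        u.box.1 = z.box.1 ∧ z.box.2 ≤ u.box.2 ∧
        (∀ c', z.box.2 < c' → c' ≤ u.box.2 → z.T (z.box.1, c') = some i) ∧
        u.T u.box = none ∧
        (z.box.2 < u.box.2 → u.T z.box = some i) ∧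
        (∀ p : Cell, p ≠ u.box → p ≠ z.box → u.T p = z.T p) := by
      intro u hu
      induction hu with
      | refl =>
        exact ⟨rfl, le_refl _, fun c' h h' => absurd h (by omega), hnone,
          fun h => absurd h (by omega), fun p _ _ => rfl⟩
      | @tail u' v' hzu hstep ih =>
        obtain ⟨hI1, hI2, hI3, hI4, hI5, hI6⟩ := ih
        obtain ⟨hpc, q, hq, rfl⟩ := hstep
        have hrowq : q.1 = u'.box.1 := hall u' _ hzu ⟨hpc, q, hq, rfl⟩
        have hq2 : u'.box.2 < q.2 := by
          have hrb := hq.2.1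
          simp only [readBefore] at hrb
          omega
        have hqneb : q ≠ u'.box := by
          intro h; rw [h] at hq2; omega
        have hqnez : q ≠ z.box := by
          intro h
          have := congrArg Prod.snd h
          omega
        have hzq : z.T q = some i := by rw [← hI6 q hqneb hqnez]; exact hq.1
        have hqpair : q = (z.box.1, q.2) := by
          have h : z.box.1 = q.1 := (hrowq.trans hI1).symm
          rw [h]
        obtain ⟨hqk, hqa, hqg⟩ := hshape q i hzq
        have hadj : q.2 = u'.box.2 + 1 := by
          by_contra hne
          have hlt : u'.box.2 + 1 < q.2 := by omega
          have hpmem : ((z.box.1, u'.box.2 + 1) : Cell) ∈ totalShape k m a g := by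
            refine ⟨hkk, by simp only; omega, ?_⟩
            rw [hrowq, hI1] at hqg
            simp only at hqg ⊢
            omega
          have hpne : ((z.box.1, u'.box.2 + 1) : Cell) ≠ z.box := by
            intro h
            have := congrArg Prod.snd h
            simp only at this
            omega
          obtain ⟨vp, hvp⟩ := hfill _ hpmem hpne
          have h1p : i ≤ vp := B2 (u'.box.2 + 1) vp (by omega) hvp
          have h2p : vp ≤ i := by
            refine hrw z.box.1 (u'.box.2 + 1) q.2 vp i (by omega) hvp ?_
            rw [hqpair] at hzq; exact hzq
          have hvpi : vp = i := le_antisymm h2p h1p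
          have hup : u'.T (z.box.1, u'.box.2 + 1) = some i := by
            rw [hI6 _ ?_ hpne]
            · rw [hvp, hvpi]
            · intro h
              have := congrArg Prod.snd h
              simp only at this
              omega
          have hrb : readBefore u'.box (z.box.1, u'.box.2 + 1) :=
            Or.inr ⟨hI1, Nat.lt_succ_self _⟩
          rcases hq.2.2 _ hup hrb with h | h
          · have := congrArg Prod.snd h
            simp only at this
            omega
          · simp only [readBefore] at h
            omega
        refine ⟨hrowq.trans hI1, show z.box.2 ≤ q.2 by omega, ?_, ?_, ?_, ?_⟩
        · intro c' h h'
          replace h' : c' ≤ q.2 := h'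
          rcases Nat.lt_or_ge c' q.2 with hc | hc
          · exact hI3 c' h (by omega)
          · have hce : c' = q.2 := by omega
            rw [hce, ← hqpair]
            exact hzq
        · show (swapState u' q i).T q = none
          rw [swapT]
          split_ifs with hA hB
          · exact absurd hA hqneb
          · rfl
          · exact absurd rfl hB
        · intro _
          show (swapState u' q i).T z.box = some i
          rw [swapT]
          split_ifs with hA hB
          · rfl
          · exact absurd hB.symm hqnez
          · refine hI5 ?_
            rcases Nat.lt_or_ge z.box.2 u'.box.2 with h | h
            · exact h
            · exfalso
              apply hA
              have : z.box.2 = u'.box.2 := by omega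
              rw [Prod.ext_iff]
              exact ⟨hI1.symm, this⟩
        · intro p hp1 hp2
          show (swapState u' q i).T p = z.T p
          rw [swapT]
          split_ifs with hA hB
          · have hub : z.box.2 < u'.box.2 := by
              rcases Nat.lt_or_ge z.box.2 u'.box.2 with h | h
              · exact h
              · exfalso
                apply hp2
                rw [hA, Prod.ext_iff]
                exact ⟨hI1, by omega⟩
            have hzi := hI3 u'.box.2 hub (le_refl _)
            have hue : u'.box = (z.box.1, u'.box.2) := by
              rw [Prod.ext_iff]; exact ⟨hI1, rfl⟩
            rw [hA, hue]
            exact hzi.symm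
          · exact absurd hB hp1
          · exact hI6 p hA hp2
    have hrev : ∀ n u,
        (u.box.1 = z.box.1 ∧ z.box.2 ≤ u.box.2 ∧
          (∀ c', z.box.2 < c' → c' ≤ u.box.2 → z.T (z.box.1, c') = some i) ∧
          u.T u.box = none ∧
          (z.box.2 < u.box.2 → u.T z.box = some i) ∧
          (∀ p : Cell, p ≠ u.box → p ≠ z.box → u.T p = z.T p)) →
        u.box.2 = z.box.2 + n → Relation.ReflTransGen (SiStep i) u z := by
      intro n
      induction n with
      | zero =>
        rintro u ⟨hI1, hI2, hI3, hI4, hI5, hI6⟩ hn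
        have hub : u.box = z.box := by
          rw [Prod.ext_iff]; exact ⟨hI1, by omega⟩
        have heq : u = z := by
          refine pstate_ext hub (funext fun p => ?_)
          by_cases hp : p = u.box
          · rw [hp, hI4, hub, hnone]
          · by_cases hpz : p = z.box
            · exact absurd (hpz.trans hub.symm) hp
            · exact hI6 p hp hpz
        rw [heq]
      | succ n ihn =>
        rintro u ⟨hI1, hI2, hI3, hI4, hI5, hI6⟩ hn
        have hub : u.box = (z.box.1, z.box.2 + n + 1) := by
          rw [Prod.ext_iff]; exact ⟨hI1, by omega⟩
        have hp0 : u.T (z.box.1, z.box.2 + n) = some i := by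
          by_cases h0 : n = 0
          · subst h0
            have he : ((z.box.1, z.box.2 + 0) : Cell) = z.box := by simp
            rw [he]
            exact hI5 (by omega)
          · have hne1 : ((z.box.1, z.box.2 + n) : Cell) ≠ u.box := by
              rw [hub]; intro h
              have := congrArg Prod.snd h
              simp only at this
              omega
            have hne2 : ((z.box.1, z.box.2 + n) : Cell) ≠ z.box := by
              intro h
              have := congrArg Prod.snd h
              simp only at this
              omega
            rw [hI6 _ hne1 hne2]
            exact hI3 (z.box.2 + n) (by omega) (by omega)
        have hstep : SiStep i u (swapState u (z.box.1, z.box.2 + n) i) := by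
          constructor
          · refine InStep.west (r := z.box.1) (c := z.box.2 + n) (v := i) hub hp0 ?_
            intro w' hw'
            by_cases hr0 : z.box.1 = 0
            · have he : ((z.box.1 - 1, z.box.2 + n + 1) : Cell) = u.box := by
                rw [hub, Prod.ext_iff]
                exact ⟨by omega, rfl⟩
              rw [he, hI4] at hw'
              cases hw'
            · have hne1 : ((z.box.1 - 1, z.box.2 + n + 1) : Cell) ≠ u.box := by
                rw [hub]; intro h
                have := congrArg Prod.fst h
                simp only at this
                omega
              have hne2 : ((z.box.1 - 1, z.box.2 + n + 1) : Cell) ≠ z.box := by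
                intro h
                have := congrArg Prod.fst h
                simp only at this
                omega
              rw [hI6 _ hne1 hne2] at hw'
              have hzi : z.T (z.box.1, z.box.2 + n + 1) = some i :=
                hI3 _ (by omega) (by omega)
              exact hcs (z.box.1 - 1) z.box.1 (z.box.2 + n + 1) w' i (by omega) hw' hzi
          · exact hp0
        refine Relation.ReflTransGen.head hstep (ihn _ ⟨rfl, Nat.le_add_right _ _, ?_, ?_, ?_, ?_⟩ rfl)
        · intro c' h h'
          replace h' : c' ≤ z.box.2 + n := h'
          exact hI3 c' h (by omega)
        · show (swapState u (z.box.1, z.box.2 + n) i).T (z.box.1, z.box.2 + n) = none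
          rw [swapT]
          split_ifs with hA hB
          · exfalso
            rw [hub] at hA
            have := congrArg Prod.snd hA
            simp only at this
            omega
          · rfl
          · exact absurd rfl hB
        · intro hlt'
          replace hlt' : z.box.2 < z.box.2 + n := hlt'
          show (swapState u (z.box.1, z.box.2 + n) i).T z.box = some i
          rw [swapT]
          split_ifs with hA hB
          · rfl
          · exfalso
            have := congrArg Prod.snd hB
            simp only at this
            omega
          · exact hI5 (by omega)
        · intro p hp1 hp2
          show (swapState u (z.box.1, z.box.2 + n) i).T p = z.T p
          rw [swapT]
          split_ifs with hA hB
          · rw [hA, hub]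
            exact (hI3 _ (by omega) (by omega)).symm
          · exact absurd hB hp1
          · exact hI6 p hA hp2
    obtain ⟨hI1, hI2, hI3, hI4, hI5, hI6⟩ := hinv w hchain
    exact ⟨hrev (w.box.2 - z.box.2) w ⟨hI1, hI2, hI3, hI4, hI5, hI6⟩ (by omega), hnostep⟩

end SC
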